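/- Let U be a nonempty finite set and g : Finset U → ℝ a nonnegative, monotonically decreasing, supermodular set function. For x ∈ X ⊆ U put d(x, X) = g(X \ {x}) − g(X), and let the steepness s be the maximum of (d(x, {x}) − d(x, U)) / d(x, {x}) over all x ∈ U with d(x, {x}) > 0; assume 0 < s < 1 and set t = s/(1 − s). Let 1 ≤ k ≤ |U| and let S_0, S_1, …, S_{|U|−k} be a greedy shrinking sequence: S_0 = U and for each j, S_{j+1} = S_j \ {x_j} where x_j ∈ S_j satisfies g(S_j \ {x_j}) ≤ g(S_j \ {x}) for all x ∈ S_j. Then the greedy output S = S_{|U|−k} satisfies g(S) ≤ ((e^t − 1)/t) · min_{T ⊆ U, |T| = k} g(T). -/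

import Mathlib

open Finset

lemma ber (A : ℝ) (hA : 1 ≤ A) (i : ℕ) :
    A ^ (i+1) - (i+1) * A ^ i ≤ (A - 1) ^ (i+1) := by
  have hA0 : (0:ℝ) < A := by linarith
  have h2 : (-2 : ℝ) ≤ -1/A := by
    rw [neg_div, neg_le_neg_iff]
    rw [div_le_iff₀ hA0]
    linarith
  have h := one_add_mul_le_pow h2 (i+1)
  have he : (1 + (-1/A)) = (A-1)/A := by field_simp; ring
  rw [he] at h
  have h3 : (1 + ((i:ℝ)+1) * (-1/A)) * A ^ (i+1) ≤ ((A-1)/A) ^ (i+1) * A ^ (i+1) := by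
    apply mul_le_mul_of_nonneg_right _ (by positivity)
    exact_mod_cast h
  calc A ^ (i+1) - ((i:ℝ)+1) * A ^ i
      = (1 + ((i:ℝ)+1) * (-1/A)) * A ^ (i+1) := by field_simp; ring
    _ ≤ ((A-1)/A) ^ (i+1) * A ^ (i+1) := h3
    _ = (A-1) ^ (i+1) := by rw [div_pow]; field_simp

lemma keyA (ℓ i : ℕ) (A : ℝ) (hA : (ℓ:ℝ) + 1 ≤ A) :
    (ℓ.choose i : ℝ) * A ^ i ≤ ((ℓ+1).choose i : ℝ) * (A-1) ^ i := by
  have hℓ0 : (0:ℝ) ≤ (ℓ:ℝ) := Nat.cast_nonneg ℓ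
  have hA1 : (1:ℝ) ≤ A := by linarith
  have hA0 : (0:ℝ) < A := by linarith
  have hAm : (0:ℝ) ≤ A - 1 := by linarith
  match i with
  | 0 => simp
  | (i+1) =>
    rcases le_or_gt (i+1) ℓ with hle | hlt
    · have hid := Nat.choose_mul_succ_eq ℓ (i+1)
      have hsub : ℓ + 1 - (i+1) = ℓ - i := by omega
      rw [hsub] at hid
      have hidR : (ℓ.choose (i+1) : ℝ) * ((ℓ:ℝ)+1)
          = ((ℓ+1).choose (i+1) : ℝ) * ((ℓ:ℝ) - (i:ℝ)) := by
        have h := congrArg (Nat.cast (R := ℝ)) hid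
        push_cast [Nat.cast_sub (show i ≤ ℓ by omega)] at h
        linarith [h]
      have hber := ber A hA1 i
      have hC : (0:ℝ) ≤ ((ℓ+1).choose (i+1) : ℝ) := Nat.cast_nonneg _
      have hpow : (0:ℝ) ≤ A ^ i := by positivity
      have hps : A ^ (i+1) = A ^ i * A := pow_succ A i
      have hkey : ((ℓ:ℝ) - i) * A ^ (i+1) ≤ ((ℓ:ℝ)+1) * (A-1) ^ (i+1) := by
        nlinarith [mul_le_mul_of_nonneg_left hber (show (0:ℝ) ≤ (ℓ:ℝ)+1 by linarith),
          mul_le_mul_of_nonneg_left (mul_le_mul_of_nonneg_right hA hpow)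
            (show (0:ℝ) ≤ (i:ℝ)+1 by positivity)]
      have hmul := mul_le_mul_of_nonneg_left hkey hC
      have hpos : (0:ℝ) < (ℓ:ℝ) + 1 := by linarith
      have hgoal : ((ℓ:ℝ)+1) * ((ℓ.choose (i+1):ℝ) * A^(i+1))
          ≤ ((ℓ:ℝ)+1) * (((ℓ+1).choose (i+1):ℝ) * (A-1)^(i+1)) := by
        have h5 : ((ℓ:ℝ)+1) * ((ℓ.choose (i+1):ℝ) * A^(i+1))
            = ((ℓ+1).choose (i+1) : ℝ) * (((ℓ:ℝ) - (i:ℝ)) * A^(i+1)) := by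
          rw [← mul_assoc, mul_comm ((ℓ:ℝ)+1) _, hidR]; ring
        rw [h5]
        calc ((ℓ+1).choose (i+1) : ℝ) * (((ℓ:ℝ) - (i:ℝ)) * A^(i+1))
            ≤ ((ℓ+1).choose (i+1) : ℝ) * (((ℓ:ℝ)+1) * (A-1)^(i+1)) := hmul
          _ = ((ℓ:ℝ)+1) * (((ℓ+1).choose (i+1):ℝ) * (A-1)^(i+1)) := by ring
      exact le_of_mul_le_mul_left hgoal hpos
    · have hz : ℓ.choose (i+1) = 0 := Nat.choose_eq_zero_of_lt (by omega)
      rw [hz]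
      push_cast
      have : (0:ℝ) ≤ ((ℓ+1).choose (i+1) : ℝ) * (A-1)^(i+1) :=
        mul_nonneg (Nat.cast_nonneg _) (pow_nonneg hAm _)
      linarith

lemma keyB (ℓ i : ℕ) (A : ℝ) (hA : (ℓ:ℝ) + 1 ≤ A) :
    (ℓ.choose (i+2) : ℝ) * A ^ (i+1) ≤ ((ℓ+1).choose (i+2) : ℝ) * (A-1) ^ (i+1) := by
  have hℓ0 : (0:ℝ) ≤ (ℓ:ℝ) := Nat.cast_nonneg ℓ
  have hA1 : (1:ℝ) ≤ A := by linarith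
  have hA0 : (0:ℝ) < A := by linarith
  have hAm : (0:ℝ) ≤ A - 1 := by linarith
  rcases le_or_gt (i+2) ℓ with hle | hlt
  · have hid := Nat.choose_mul_succ_eq ℓ (i+2)
    have hsub : ℓ + 1 - (i+2) = ℓ - i - 1 := by omega
    rw [hsub] at hid
    have hidR : (ℓ.choose (i+2) : ℝ) * ((ℓ:ℝ)+1)
        = ((ℓ+1).choose (i+2) : ℝ) * ((ℓ:ℝ) - (i:ℝ) - 1) := by
      have h := congrArg (Nat.cast (R := ℝ)) hid
      push_cast [Nat.cast_sub (show i ≤ ℓ by omega), Nat.cast_sub (show 1 ≤ ℓ - i by omega)] at h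
      linarith [h]
    have hber := ber A hA1 i
    have hC : (0:ℝ) ≤ ((ℓ+1).choose (i+2) : ℝ) := Nat.cast_nonneg _
    have hpow : (0:ℝ) ≤ A ^ i := by positivity
    have hps : A ^ (i+1) = A ^ i * A := pow_succ A i
    have hkey : ((ℓ:ℝ) - i - 1) * A ^ (i+1) ≤ ((ℓ:ℝ)+1) * (A-1) ^ (i+1) := by
      nlinarith [mul_le_mul_of_nonneg_left hber (show (0:ℝ) ≤ (ℓ:ℝ)+1 by linarith),
        mul_le_mul_of_nonneg_left (mul_le_mul_of_nonneg_right hA hpow)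
          (show (0:ℝ) ≤ (i:ℝ)+1 by positivity)]
    have hmul := mul_le_mul_of_nonneg_left hkey hC
    have hpos : (0:ℝ) < (ℓ:ℝ) + 1 := by linarith
    have hgoal : ((ℓ:ℝ)+1) * ((ℓ.choose (i+2):ℝ) * A^(i+1))
        ≤ ((ℓ:ℝ)+1) * (((ℓ+1).choose (i+2):ℝ) * (A-1)^(i+1)) := by
      have h5 : ((ℓ:ℝ)+1) * ((ℓ.choose (i+2):ℝ) * A^(i+1))
          = ((ℓ+1).choose (i+2) : ℝ) * (((ℓ:ℝ) - (i:ℝ) - 1) * A^(i+1)) := by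
        rw [← mul_assoc, mul_comm ((ℓ:ℝ)+1) _, hidR]; ring
      rw [h5]
      calc ((ℓ+1).choose (i+2) : ℝ) * (((ℓ:ℝ) - (i:ℝ) - 1) * A^(i+1))
          ≤ ((ℓ+1).choose (i+2) : ℝ) * (((ℓ:ℝ)+1) * (A-1)^(i+1)) := hmul
        _ = ((ℓ:ℝ)+1) * (((ℓ+1).choose (i+2):ℝ) * (A-1)^(i+1)) := by ring
    exact le_of_mul_le_mul_left hgoal hpos
  · have hz : ℓ.choose (i+2) = 0 := Nat.choose_eq_zero_of_lt (by omega)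
    rw [hz]
    push_cast
    have : (0:ℝ) ≤ ((ℓ+1).choose (i+2) : ℝ) * (A-1)^(i+1) :=
      mul_nonneg (Nat.cast_nonneg _) (pow_nonneg hAm _)
    linarith



lemma expand_pow (x : ℝ) (n : ℕ) :
    (1 + x)^n = ∑ i ∈ range (n+1), x^i * (n.choose i : ℝ) := by
  rw [add_comm, add_pow]
  simp

lemma L1 (p : ℕ) (t A : ℝ) (ht : 0 ≤ t) (hA : (p:ℝ) + 2 ≤ A) :
    (1 + t/(A-1))^(p+1) ≤ (1 + t/A)^(p+2) := by
  have hp0 : (0:ℝ) ≤ p := Nat.cast_nonneg p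
  have hA0 : (0:ℝ) < A := by linarith
  have hA1 : (0:ℝ) < A - 1 := by linarith
  have hterm : ∀ i ∈ range (p+2),
      (t/(A-1))^i * ((p+1).choose i : ℝ) ≤ (t/A)^i * ((p+2).choose i : ℝ) := by
    intro i _
    have hk := keyA (p+1) i A (by push_cast; linarith)
    rw [div_pow, div_pow, div_mul_eq_mul_div, div_mul_eq_mul_div,
      div_le_div_iff₀ (pow_pos hA1 i) (pow_pos hA0 i)]
    have h2 := mul_le_mul_of_nonneg_left hk (pow_nonneg ht i)
    have e : ((p+1)+1).choose i = (p+2).choose i := by norm_num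
    rw [e] at h2
    nlinarith [h2]
  calc (1 + t/(A-1))^(p+1)
      = ∑ i ∈ range (p+2), (t/(A-1))^i * ((p+1).choose i : ℝ) := expand_pow _ _
    _ ≤ ∑ i ∈ range (p+2), (t/A)^i * ((p+2).choose i : ℝ) := sum_le_sum hterm
    _ ≤ ∑ i ∈ range (p+3), (t/A)^i * ((p+2).choose i : ℝ) := by
        conv_rhs => rw [show p+3 = (p+2)+1 from rfl, sum_range_succ]
        have : (0:ℝ) ≤ (t/A)^(p+2) * ((p+2).choose (p+2) : ℝ) := by positivity
        linarith
    _ = (1 + t/A)^(p+2) := (expand_pow _ _).symm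

lemma L2 (p : ℕ) (t A : ℝ) (ht : 0 ≤ t) (hA : (p:ℝ) + 2 ≤ A) :
    (A - 1) * (1 + t/(A-1))^(p+1) + (1+t) ≤ A * (1 + t/A)^(p+2) := by
  have hp0 : (0:ℝ) ≤ p := Nat.cast_nonneg p
  have hA0 : (0:ℝ) < A := by linarith
  have hA1 : (0:ℝ) < A - 1 := by linarith
  have hA1' : A - 1 ≠ 0 := ne_of_gt hA1
  have hA0' : A ≠ 0 := ne_of_gt hA0
  rw [expand_pow (t/(A-1)) (p+1), expand_pow (t/A) (p+2), mul_sum, mul_sum]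
  rw [show p + 2 = (p+1) + 1 from rfl, sum_range_succ' _ (p+1)]
  rw [sum_range_succ' (fun k => (A-1) * ((t/(A-1))^(k+1) * (((p+1).choose (k+1)) : ℝ))) p]
  rw [show p + 3 = (p+2) + 1 from rfl, sum_range_succ' _ (p+2)]
  rw [sum_range_succ' (fun k => A * ((t/A)^(k+1) * (((p+2).choose (k+1)) : ℝ))) (p+1)]
  -- low order terms
  have l0 : (A-1) * ((t/(A-1))^0 * (((p+1).choose 0) : ℝ)) = A - 1 := by simp
  have l1 : (A-1) * ((t/(A-1))^(0+1) * (((p+1).choose (0+1)) : ℝ)) = t * ((p:ℝ)+1) := by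
    norm_num [Nat.choose_one_right]
    field_simp
  have r0 : A * ((t/A)^0 * (((p+2).choose 0) : ℝ)) = A := by simp
  have r1 : A * ((t/A)^(0+1) * (((p+2).choose (0+1)) : ℝ)) = t * ((p:ℝ)+2) := by
    norm_num [Nat.choose_one_right]
    field_simp
  rw [l0, l1, r0, r1]
  -- remaining sums
  have hterm : ∀ i ∈ range p,
      (A-1) * ((t/(A-1))^(i+1+1) * (((p+1).choose (i+1+1)) : ℝ))
        ≤ A * ((t/A)^(i+1+1) * (((p+2).choose (i+1+1)) : ℝ)) := by
    intro i _
    have hk := keyB (p+1) i A (by push_cast; linarith)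
    have e : ((p+1)+1).choose (i+2) = (p+2).choose (i+2) := by norm_num
    rw [e] at hk
    have eL : (A-1) * ((t/(A-1))^(i+2) * (((p+1).choose (i+2)) : ℝ))
        = (t^(i+2) * (((p+1).choose (i+2)) : ℝ))/(A-1)^(i+1) := by
      rw [div_pow]; field_simp; ring
    have eR : A * ((t/A)^(i+2) * (((p+2).choose (i+2)) : ℝ))
        = (t^(i+2) * (((p+2).choose (i+2)) : ℝ))/A^(i+1) := by
      rw [div_pow]; field_simp; ring
    show (A-1) * ((t/(A-1))^(i+2) * _) ≤ A * ((t/A)^(i+2) * _)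
    rw [eL, eR, div_le_div_iff₀ (pow_pos hA1 (i+1)) (pow_pos hA0 (i+1))]
    have h2 := mul_le_mul_of_nonneg_left hk (pow_nonneg ht (i+2))
    nlinarith [h2]
  have hsum : ∑ i ∈ range p, (A-1) * ((t/(A-1))^(i+1+1) * (((p+1).choose (i+1+1)) : ℝ))
      ≤ ∑ i ∈ range (p+1), A * ((t/A)^(i+1+1) * (((p+2).choose (i+1+1)) : ℝ)) := by
    calc _ ≤ ∑ i ∈ range p, A * ((t/A)^(i+1+1) * (((p+2).choose (i+1+1)) : ℝ)) :=
          sum_le_sum hterm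
      _ ≤ _ := by
          rw [sum_range_succ]
          have : (0:ℝ) ≤ A * ((t/A)^(p+1+1) * (((p+2).choose (p+1+1)) : ℝ)) := by positivity
          linarith
  push_cast
  push_cast at hsum
  linarith [hsum]



lemma step_in (t A E E' δ P : ℝ) (ht : 0 < t) (hA : 0 < A) (hδA : A*δ ≤ E)
    (hE' : E' ≤ E + t*δ) (hP : 1 ≤ P) :
    δ + (E'/t)*(P - 1) ≤ (E/t)*(P*(1+t/A) - 1) := by
  have ht' : t ≠ 0 := ne_of_gt ht
  have hA' : A ≠ 0 := ne_of_gt hA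
  have h1 : (E'/t)*(P-1) ≤ ((E+t*δ)/t)*(P-1) := by
    apply mul_le_mul_of_nonneg_right _ (by linarith)
    exact (div_le_div_iff_of_pos_right ht).mpr hE'
  have e1 : δ + ((E+t*δ)/t)*(P-1) = (t*δ*P + E*(P-1))/t := by field_simp; ring
  have e2 : (E/t)*(P*(1+t/A)-1) = (E*(P-1) + (E/A)*t*P)/t := by field_simp; ring
  have hδ : δ ≤ E/A := (le_div_iff₀ hA).mpr (by linarith)
  have h2 : t*δ*P + E*(P-1) ≤ E*(P-1) + (E/A)*t*P := by
    nlinarith [mul_le_mul_of_nonneg_right hδ (show (0:ℝ) ≤ t*P by nlinarith)]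
  calc δ + (E'/t)*(P-1) ≤ δ + ((E+t*δ)/t)*(P-1) := by linarith
    _ = (t*δ*P + E*(P-1))/t := e1
    _ ≤ (E*(P-1) + (E/A)*t*P)/t := (div_le_div_iff_of_pos_right ht).mpr h2
    _ = (E/t)*(P*(1+t/A)-1) := e2.symm

lemma step_out (t A E δ Q R : ℝ) (ht : 0 < t) (hA : 0 < A) (hδ0 : 0 ≤ δ) (hδA : A*δ ≤ E)
    (hL1 : Q ≤ R) (hL2 : (A-1)*Q + (1+t) ≤ A*R) :
    δ + ((E - δ)/t)*(Q - 1) ≤ (E/t)*(R - 1) := by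
  have hE0 : (0:ℝ) ≤ E := le_trans (mul_nonneg (le_of_lt hA) hδ0) hδA
  have key2 : A*(t*δ + (E-δ)*(Q-1)) ≤ A*(E*(R-1)) := by
    rcases le_or_gt Q (1+t) with hQ | hQ
    · nlinarith [mul_le_mul_of_nonneg_right hδA (show (0:ℝ) ≤ t - (Q-1) by linarith),
        mul_le_mul_of_nonneg_left (show t + (A-1)*(Q-1) ≤ A*(R-1) by nlinarith) hE0]
    · nlinarith [mul_nonneg (mul_nonneg (le_of_lt hA) hδ0) (show (0:ℝ) ≤ Q-1-t by linarith),
        mul_le_mul_of_nonneg_left hL1 (mul_nonneg (le_of_lt hA) hE0)]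
  have key : t*δ + (E-δ)*(Q-1) ≤ E*(R-1) := le_of_mul_le_mul_left key2 hA
  have e1 : δ + ((E - δ)/t)*(Q - 1) = (t*δ + (E-δ)*(Q-1))/t := by field_simp
  have e2 : (E/t)*(R-1) = (E*(R-1))/t := by ring
  rw [e1, e2]
  exact (div_le_div_iff_of_pos_right ht).mpr key

set_option maxHeartbeats 2000000 in
/-- Greedy shrinking approximation guarantee for minimizing a nonnegative,
monotonically decreasing, supermodular set function with steepness `s`. -/
theorem greedy_shrink_approx {U : Type*} [Fintype U] [DecidableEq U] [Nonempty U]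
    (g : Finset U → ℝ)
    (hg_nonneg : ∀ A : Finset U, 0 ≤ g A)
    (hg_mono : ∀ (A : Finset U) (x : U), x ∉ A → g (insert x A) ≤ g A)
    (hg_super : ∀ (A B : Finset U), A ⊆ B → ∀ x : U, x ∉ B →
      g (insert x A) - g A ≤ g (insert x B) - g B)
    (d : U → Finset U → ℝ)
    (hd : ∀ (x : U) (X : Finset U), d x X = g (X.erase x) - g X)
    (s : ℝ)
    (hne : (Finset.univ.filter (fun x : U => 0 < d x {x})).Nonempty)
    (hs_def : s = (Finset.univ.filter (fun x : U => 0 < d x {x})).sup' hne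
      (fun x => (d x {x} - d x Finset.univ) / d x {x}))
    (hs0 : 0 < s) (hs1 : s < 1)
    (t : ℝ) (ht : t = s / (1 - s))
    (k : ℕ) (hk1 : 1 ≤ k) (hk2 : k ≤ Fintype.card U)
    (S : ℕ → Finset U)
    (hS0 : S 0 = Finset.univ)
    (hSstep : ∀ j < Fintype.card U - k, ∃ x ∈ S j,
      S (j + 1) = (S j).erase x ∧ ∀ y ∈ S j, g ((S j).erase x) ≤ g ((S j).erase y)) :
    g (S (Fintype.card U - k))
      ≤ ((Real.exp t - 1) / t) *
        ((Finset.univ.powersetCard k).inf'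
          (Finset.powersetCard_nonempty.mpr (by simpa using hk2)) g) := by
  classical
  have hs' : 0 < 1 - s := by linarith
  have ht0 : 0 < t := by rw [ht]; positivity
  -- monotonicity helpers
  have hins : ∀ (a : U) (X : Finset U), g (insert a X) ≤ g X := by
    intro a X
    by_cases h : a ∈ X
    · rw [Finset.insert_eq_self.mpr h]
    · exact hg_mono X a h
  have herase : ∀ (X : Finset U) (x : U), x ∈ X → g X ≤ g (X.erase x) := by
    intro X x hx
    conv_lhs => rw [← Finset.insert_erase hx]
    exact hins x _
  have gmono : ∀ (P Q : Finset U), P ⊆ Q → g Q ≤ g P := by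
    intro P Q h
    have key : ∀ (B P : Finset U), g (P ∪ B) ≤ g P := by
      intro B
      induction B using Finset.induction_on with
      | empty => intro P; rw [Finset.union_empty]
      | @insert a B' ha ih =>
        intro P
        rw [Finset.union_insert]
        exact le_trans (hins a _) (ih P)
    have h2 := key (Q \ P) P
    rwa [Finset.union_sdiff_of_subset h] at h2
  have dmono : ∀ (Y X : Finset U) (y : U), Y ⊆ X → y ∈ Y →
      g (X.erase y) - g X ≤ g (Y.erase y) - g Y := by
    intro Y X y hYX hyY
    have h := hg_super (Y.erase y) (X.erase y) (Finset.erase_subset_erase y hYX) y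
      (Finset.notMem_erase y X)
    rw [Finset.insert_erase hyY, Finset.insert_erase (hYX hyY)] at h
    linarith
  have chain : ∀ (B X : Finset U), B ⊆ X →
      ∑ y ∈ B, (g (X.erase y) - g X) ≤ g (X \ B) - g X := by
    intro B
    induction B using Finset.induction_on with
    | empty => intro X _; simp
    | @insert a B' ha ih =>
      intro X hBX
      have haX : a ∈ X := hBX (Finset.mem_insert_self a B')
      have hB'sub : B' ⊆ X.erase a := by
        intro y hy
        exact Finset.mem_erase.mpr ⟨fun h => ha (h ▸ hy), hBX (Finset.mem_insert_of_mem hy)⟩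
      rw [Finset.sum_insert ha]
      have h1 : ∑ y ∈ B', (g (X.erase y) - g X)
          ≤ ∑ y ∈ B', (g ((X.erase a).erase y) - g (X.erase a)) := by
        apply Finset.sum_le_sum
        intro y hy
        exact dmono (X.erase a) X y (Finset.erase_subset a X) (hB'sub hy)
      have h2 := ih (X.erase a) hB'sub
      have h3 : (X.erase a) \ B' = X \ insert a B' := by
        ext z
        simp only [Finset.mem_sdiff, Finset.mem_erase, Finset.mem_insert]
        tauto
      rw [h3] at h2
      linarith
  -- steepness
  have hdu0 : ∀ x : U, 0 ≤ d x Finset.univ := by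
    intro x
    rw [hd]
    linarith [herase Finset.univ x (Finset.mem_univ x)]
  have hsteep : ∀ x : U, d x {x} ≤ (1+t) * d x Finset.univ := by
    intro x
    rcases le_or_gt (d x {x}) 0 with h | h
    · nlinarith [hdu0 x]
    · have hmem : x ∈ Finset.univ.filter (fun x : U => 0 < d x {x}) :=
        Finset.mem_filter.mpr ⟨Finset.mem_univ x, h⟩
      have hle : (d x {x} - d x Finset.univ) / d x {x} ≤ s := by
        rw [hs_def]
        exact Finset.le_sup' (fun x : U => (d x {x} - d x Finset.univ) / d x {x}) hmem
      rw [div_le_iff₀ h] at hle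
      have h1t : 1 + t = 1/(1-s) := by rw [ht]; field_simp; ring
      rw [h1t, one_div, ← div_eq_inv_mul, le_div_iff₀ hs']
      nlinarith [hle]
  -- the optimal set
  obtain ⟨T, hTmem, hTeq⟩ := Finset.exists_mem_eq_inf'
    (Finset.powersetCard_nonempty.mpr (by simpa using hk2) :
      (Finset.univ.powersetCard k).Nonempty) g
  have hTcard : T.card = k := Finset.mem_powersetCard_univ.mp hTmem
  rw [hTeq]
  obtain ⟨n, hndef⟩ : ∃ n, Fintype.card U = n := ⟨_, rfl⟩
  obtain ⟨m, hmdef⟩ : ∃ m, n - k = m := ⟨_, rfl⟩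
  rw [hndef] at hk2
  rw [hndef, hmdef] at hSstep
  rw [hndef, hmdef]
  -- cardinality of S j
  have hcard : ∀ j, j ≤ m → (S j).card = n - j := by
    intro j
    induction j with
    | zero => intro _; rw [hS0]; simp [Finset.card_univ, hndef]
    | succ j ihj =>
      intro hj
      obtain ⟨x, hxS, hSeq, _⟩ := hSstep j (by omega)
      rw [hSeq, Finset.card_erase_of_mem hxS, ihj (by omega)]
      omega
  -- main induction
  have key : ∀ ℓ : ℕ, ∀ j : ℕ, j + ℓ = m →
      g (S m) ≤ g (S j) + ((g (S j ∩ T) - g (S j)) / t) *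
        ((1 + t / (((S j \ T).card : ℕ) : ℝ))^ℓ - 1) := by
    intro ℓ
    induction ℓ with
    | zero =>
      intro j hj
      have hjm : j = m := by omega
      subst hjm
      simp
    | succ ℓ ih =>
      intro j hj
      have hjm : j < m := by omega
      obtain ⟨x, hxS, hSeq, hgreedy⟩ := hSstep j hjm
      have hcX : (S j).card = n - j := hcard j (by omega)
      have hcT : (S j ∩ T).card ≤ k := by
        calc (S j ∩ T).card ≤ T.card := Finset.card_le_card Finset.inter_subset_right
          _ = k := hTcard
      have hsplit := Finset.card_inter_add_card_sdiff (S j) T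
      have hAnat : ℓ + 1 ≤ (S j \ T).card := by omega
      have hA : (ℓ:ℝ) + 1 ≤ (((S j \ T).card : ℕ) : ℝ) := by exact_mod_cast hAnat
      have hApos : (0:ℝ) < (((S j \ T).card : ℕ) : ℝ) := by
        have h0 : (0:ℝ) ≤ (ℓ:ℝ) := Nat.cast_nonneg ℓ
        linarith
      have hδ0 : 0 ≤ g (S (j+1)) - g (S j) := by
        rw [hSeq]; linarith [herase (S j) x hxS]
      have hsum : (((S j \ T).card : ℕ) : ℝ) * (g (S (j+1)) - g (S j))
          ≤ g (S j ∩ T) - g (S j) := by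
        have h1 : ∀ y ∈ S j \ T, g (S (j+1)) - g (S j) ≤ g ((S j).erase y) - g (S j) := by
          intro y hy
          have := hgreedy y (Finset.mem_sdiff.mp hy).1
          rw [hSeq]; linarith
        have h2 := Finset.card_nsmul_le_sum (S j \ T)
          (fun y => g ((S j).erase y) - g (S j)) _ h1
        rw [nsmul_eq_mul] at h2
        have h3 := chain (S j \ T) (S j) Finset.sdiff_subset
        rw [Finset.sdiff_sdiff_self_left] at h3
        linarith
      by_cases hxT : x ∈ T
      · -- in-step
        have hST : S (j+1) ∩ T = (S j ∩ T).erase x := by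
          rw [hSeq]
          ext z
          simp only [Finset.mem_inter, Finset.mem_erase]
          tauto
        have hSd : S (j+1) \ T = S j \ T := by
          rw [hSeq]
          ext z
          simp only [Finset.mem_sdiff, Finset.mem_erase]
          constructor
          · rintro ⟨⟨hz1, hz2⟩, hz3⟩; exact ⟨hz2, hz3⟩
          · rintro ⟨hz1, hz2⟩; exact ⟨⟨fun he => hz2 (he ▸ hxT), hz1⟩, hz2⟩
        have hxIT : x ∈ S j ∩ T := Finset.mem_inter.mpr ⟨hxS, hxT⟩
        have hE' : g ((S j ∩ T).erase x) - g (S (j+1))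
            ≤ (g (S j ∩ T) - g (S j)) + t * (g (S (j+1)) - g (S j)) := by
          have hd_mono1 : g ((S j ∩ T).erase x) - g (S j ∩ T)
              ≤ g (({x} : Finset U).erase x) - g {x} :=
            dmono {x} (S j ∩ T) x (Finset.singleton_subset_iff.mpr hxIT)
              (Finset.mem_singleton_self x)
          rw [Finset.erase_singleton] at hd_mono1
          have hd_univ : g (Finset.univ.erase x) - g Finset.univ
              ≤ g (S (j+1)) - g (S j) := by
            have := dmono (S j) Finset.univ x (Finset.subset_univ _) hxS
            rw [hSeq]; linarith
          have hst := hsteep x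
          rw [hd, hd, Finset.erase_singleton] at hst
          have h1t : (0:ℝ) ≤ 1 + t := by linarith
          have hmul := mul_le_mul_of_nonneg_left hd_univ h1t
          linarith
        have hih := ih (j+1) (by omega)
        rw [hSd, hST] at hih
        have hstep := step_in t (((S j \ T).card : ℕ) : ℝ)
          (g (S j ∩ T) - g (S j)) (g ((S j ∩ T).erase x) - g (S (j+1)))
          (g (S (j+1)) - g (S j)) ((1 + t / (((S j \ T).card : ℕ) : ℝ))^ℓ)
          ht0 hApos hsum hE'
          (one_le_pow₀ (by
            have : (0:ℝ) ≤ t / (((S j \ T).card : ℕ) : ℝ) := by positivity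
            linarith))
        rw [pow_succ]
        linarith [hih, hstep]
      · -- out-step
        have hST : S (j+1) ∩ T = S j ∩ T := by
          rw [hSeq]
          ext z
          simp only [Finset.mem_inter, Finset.mem_erase]
          constructor
          · rintro ⟨⟨hz1, hz2⟩, hz3⟩; exact ⟨hz2, hz3⟩
          · rintro ⟨hz1, hz2⟩; exact ⟨⟨fun he => hxT (he ▸ hz2), hz1⟩, hz2⟩
        have hxSd : x ∈ S j \ T := Finset.mem_sdiff.mpr ⟨hxS, hxT⟩
        have hSd : S (j+1) \ T = (S j \ T).erase x := by
          rw [hSeq]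
          ext z
          simp only [Finset.mem_sdiff, Finset.mem_erase]
          tauto
        have hc1 : (((S (j+1) \ T).card : ℕ) : ℝ) = (((S j \ T).card : ℕ) : ℝ) - 1 := by
          rw [hSd, Finset.card_erase_of_mem hxSd]
          rw [Nat.cast_sub (by omega : 1 ≤ (S j \ T).card)]
          norm_num
        have hih := ih (j+1) (by omega)
        rw [hST, hc1] at hih
        have hE'eq : g (S j ∩ T) - g (S (j+1))
            = (g (S j ∩ T) - g (S j)) - (g (S (j+1)) - g (S j)) := by ring
        match ℓ with
        | 0 =>
          have e0 : (1 + t / ((((S j \ T).card : ℕ) : ℝ) - 1))^(0:ℕ) = 1 := pow_zero _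
          rw [e0] at hih
          simp only [sub_self, mul_zero, add_zero] at hih
          have hδ : g (S (j+1)) - g (S j)
              ≤ (g (S j ∩ T) - g (S j)) / (((S j \ T).card : ℕ) : ℝ) :=
            (le_div_iff₀ hApos).mpr (by linarith [hsum])
          have e1 : ((g (S j ∩ T) - g (S j)) / t) *
              ((1 + t / (((S j \ T).card : ℕ) : ℝ))^(0+1) - 1)
              = (g (S j ∩ T) - g (S j)) / (((S j \ T).card : ℕ) : ℝ) := by
            rw [pow_one]
            field_simp
            ring
          rw [e1]
          linarith [hih]
        | (p+1) =>
          have hA2 : (p:ℝ) + 2 ≤ (((S j \ T).card : ℕ) : ℝ) := by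
            push_cast at hA ⊢
            linarith
          have hl1 := L1 p t _ (le_of_lt ht0) hA2
          have hl2 := L2 p t _ (le_of_lt ht0) hA2
          have hstep := step_out t (((S j \ T).card : ℕ) : ℝ)
            (g (S j ∩ T) - g (S j)) (g (S (j+1)) - g (S j))
            ((1 + t / ((((S j \ T).card : ℕ) : ℝ) - 1))^(p+1))
            ((1 + t / (((S j \ T).card : ℕ) : ℝ))^(p+2))
            ht0 hApos hδ0 hsum hl1 hl2
          have hexp : p + 1 + 1 = p + 2 := by omega
          rw [hexp]
          have heq : g (S j ∩ T) - g (S (j+1))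
              = g (S j ∩ T) - g (S j) - (g (S (j+1)) - g (S j)) := by ring
          rw [heq] at hih
          linarith [hih, hstep]
  -- conclusion
  rcases Nat.eq_zero_or_pos m with hm0 | hm0
  · have hCge1 : 1 ≤ (Real.exp t - 1)/t := by
      rw [le_div_iff₀ ht0]
      linarith [Real.add_one_le_exp t]
    have h1 : g (S m) ≤ g T := by
      rw [hm0, hS0]
      exact gmono T Finset.univ (Finset.subset_univ T)
    calc g (S m) ≤ g T := h1
      _ = 1 * g T := (one_mul _).symm
      _ ≤ ((Real.exp t - 1)/t) * g T := mul_le_mul_of_nonneg_right hCge1 (hg_nonneg T)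
  · have hkey := key m 0 (by omega)
    rw [hS0, Finset.univ_inter] at hkey
    have hcm : (((Finset.univ \ T).card : ℕ) : ℝ) = (m:ℝ) := by
      rw [← Finset.compl_eq_univ_sdiff, Finset.card_compl, hTcard, hndef, hmdef]
    rw [hcm] at hkey
    have hmpos : (0:ℝ) < (m:ℝ) := by exact_mod_cast hm0
    have hmne : (m:ℝ) ≠ 0 := ne_of_gt hmpos
    set X := (1 + t/(m:ℝ))^m with hX
    have hb1 : 1 + t ≤ X := by
      have hnn : (0:ℝ) ≤ t/(m:ℝ) := by positivity
      have h := one_add_mul_le_pow (a := t/(m:ℝ)) (by linarith) m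
      have he : (m:ℝ)*(t/(m:ℝ)) = t := by field_simp
      rw [he] at h
      exact h
    have hb2 : X ≤ Real.exp t := by
      have h1 : 1 + t/(m:ℝ) ≤ Real.exp (t/(m:ℝ)) := by
        linarith [Real.add_one_le_exp (t/(m:ℝ))]
      have h2 : (0:ℝ) ≤ 1 + t/(m:ℝ) := by positivity
      calc X ≤ (Real.exp (t/(m:ℝ)))^m := pow_le_pow_left₀ h2 h1 m
        _ = Real.exp t := by
          rw [← Real.exp_nat_mul]
          congr 1
          field_simp
    have hmul : t*(g Finset.univ) + (g T - g Finset.univ)*(X-1)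
        ≤ (Real.exp t - 1)*(g T) := by
      have hh1 := mul_le_mul_of_nonneg_right (show X - 1 ≤ Real.exp t - 1 by linarith)
          (hg_nonneg T)
      have hh2 := mul_le_mul_of_nonneg_right (show t ≤ X - 1 by linarith)
          (hg_nonneg Finset.univ)
      linarith [hh1, hh2]
    have e : g Finset.univ + ((g T - g Finset.univ)/t)*(X-1)
        = (t*(g Finset.univ) + (g T - g Finset.univ)*(X-1))/t := by
      field_simp
    have e2 : ((Real.exp t - 1)/t)*(g T) = ((Real.exp t - 1)*(g T))/t := by ring
    rw [e2]
    calc g (S m) ≤ g Finset.univ + ((g T - g Finset.univ)/t)*(X-1) := hkey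
      _ = (t*(g Finset.univ) + (g T - g Finset.univ)*(X-1))/t := e
      _ ≤ ((Real.exp t - 1)*(g T))/t := (div_le_div_iff_of_pos_right ht0).mpr hmul
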